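/- Let R be a (possibly noncommutative) ring and A, B, C ∈ R satisfy A² = 0, AB + BA = 0, AC + CA + B² = 0, BC + CB = 0, and C² = 0. Let N ∈ ℕ and let I₀, I₁, …, I_N ∈ R satisfy [A, I₀] = 0, [A, I₁] + [B, I₀] = 0, and [A, Iₙ] + [B, Iₙ₋₁] + [C, Iₙ₋₂] = 0 for all 2 ≤ n ≤ N, where [x, y] = xy − yx. Then, setting J := [B, I_N] + [C, I_{N−1}] (with the convention I_{−1} = 0 when N = 0), one has A·J + J·A = 0. In other words, the obstruction to solving the next order of the recursion for the metric is annihilated by the anticommutator with A. -/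
import Mathlib

private lemma obstruction_key {R : Type*} [Ring R] (A B C x y z w : R)
    (h2 : A * B + B * A = 0)
    (h3 : A * C + C * A + B * B = 0)
    (h4 : B * C + C * B = 0)
    (h5 : C * C = 0)
    (ex : (A * x - x * A) + (B * y - y * B) + (C * z - z * C) = 0)
    (ey : (A * y - y * A) + (B * z - z * B) + (C * w - w * C) = 0) :
    A * ((B * x - x * B) + (C * y - y * C))
      + ((B * x - x * B) + (C * y - y * C)) * A = 0 := by
  have key : A * ((B * x - x * B) + (C * y - y * C))
      + ((B * x - x * B) + (C * y - y * C)) * A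
      = (A * B + B * A) * x - x * (A * B + B * A)
        + ((A * C + C * A + B * B) * y - y * (A * C + C * A + B * B))
        + ((B * C + C * B) * z - z * (B * C + C * B))
        + ((C * C) * w - w * (C * C))
        - B * ((A * x - x * A) + (B * y - y * B) + (C * z - z * C))
        - ((A * x - x * A) + (B * y - y * B) + (C * z - z * C)) * B
        - C * ((A * y - y * A) + (B * z - z * B) + (C * w - w * C))
        - ((A * y - y * A) + (B * z - z * B) + (C * w - w * C)) * C := by
    noncomm_ring
  rw [key, h2, h3, h4, h5, ex, ey]
  simp

/-- Given ring elements `A, B, C` satisfying the order-by-order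
nilpotency relations and a solution `I₀, …, I_N` of the commutator recursion
`[A, Iₙ] + [B, Iₙ₋₁] + [C, Iₙ₋₂] = 0`, the next-order obstruction
`J = [B, I_N] + [C, I_{N-1}]` (with `I_{-1} = 0` when `N = 0`) satisfies
`A·J + J·A = 0`. -/
theorem metric_recursion_obstruction_anticommutes_with_A
    {R : Type*} [Ring R] (A B C : R)
    (h1 : A * A = 0)
    (h2 : A * B + B * A = 0)
    (h3 : A * C + C * A + B * B = 0)
    (h4 : B * C + C * B = 0)
    (h5 : C * C = 0)
    (N : ℕ) (I : ℕ → R)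
    (hI0 : A * I 0 - I 0 * A = 0)
    (hI1 : 1 ≤ N → (A * I 1 - I 1 * A) + (B * I 0 - I 0 * B) = 0)
    (hIn : ∀ n : ℕ, 2 ≤ n → n ≤ N →
      (A * I n - I n * A) + (B * I (n - 1) - I (n - 1) * B)
        + (C * I (n - 2) - I (n - 2) * C) = 0)
    (J : R)
    (hJ : J = (B * I N - I N * B)
        + (C * (if N = 0 then 0 else I (N - 1))
            - (if N = 0 then 0 else I (N - 1)) * C)) :
    A * J + J * A = 0 := by
  subst hJ
  match N with
  | 0 =>
      simp only [if_pos rfl]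
      exact obstruction_key A B C (I 0) 0 0 0 h2 h3 h4 h5 (by simpa using hI0) (by simp)
  | 1 =>
      simp only [if_neg (by norm_num : (1:ℕ) ≠ 0)]
      exact obstruction_key A B C (I 1) (I 0) 0 0 h2 h3 h4 h5
        (by simpa using hI1 le_rfl) (by simpa using hI0)
  | 2 =>
      simp only [if_neg (by norm_num : (2:ℕ) ≠ 0)]
      exact obstruction_key A B C (I 2) (I 1) (I 0) 0 h2 h3 h4 h5
        (by simpa using hIn 2 le_rfl le_rfl) (by simpa using hI1 (by norm_num))
  | (n+3) =>
      simp only [if_neg (by omega : n + 3 ≠ 0)]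
      have e1 := hIn (n+3) (by omega) le_rfl
      have e2 := hIn (n+2) (by omega) (by omega)
      simp only [Nat.add_sub_cancel] at e1 e2
      exact obstruction_key A B C (I (n+3)) (I (n+2)) (I (n+1)) (I n) h2 h3 h4 h5
        e1 e2
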